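/- Let V be a real inner product space of finite dimension 2n+1 with n ≥ 1. Let ξ ∈ V be a unit vector, let η be the linear functional η(Y) = ⟨Y, ξ⟩, and let φ be a skew-adjoint endomorphism of V satisfying φ(φ(Y)) = -Y + η(Y)ξ for all Y ∈ V and φ(ξ) = 0. Let h and Q be endomorphisms of V with h(ξ) = 0, h∘φ = -φ∘h, and Q∘φ = φ∘Q. If there exist real numbers c ≠ 0 and λ such that Q(Z) + c·h(φ(Z)) = λ·Z for all Z ∈ V, then Q = λ·id and h = 0. (This is the pointwise linear-algebra argument in the proof of Theorem 4.3: substituting φZ into the soliton identity (5.5) gives Qφ − c·h = λφ, applying φ gives φQ + c·h = λφ, and adding these with Qφ = φQ forces Q = λ·id and h = 0.) -/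
import Mathlib


open RealInnerProductSpace

/-- The pointwise linear-algebra argument in the proof of Theorem 4.3:
if `Q Z + c h(φ Z) = λ Z` for all `Z`, with `c ≠ 0`, `h ξ = 0`, `hφ = -φh`
and `Qφ = φQ`, then `Q = λ · id` and `h = 0`. -/
theorem soliton_collinear_pointwise {V : Type*} [NormedAddCommGroup V] [InnerProductSpace ℝ V]
    [FiniteDimensional ℝ V] (n : ℕ) (hn : 1 ≤ n)
    (hdim : Module.finrank ℝ V = 2 * n + 1)
    (ξ : V) (hξ : ‖ξ‖ = 1)
    (φ h Q : V →ₗ[ℝ] V)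
    (hφskew : ∀ Y Z : V, ⟪φ Y, Z⟫ = -⟪Y, φ Z⟫)
    (hφ2 : ∀ Y : V, φ (φ Y) = -Y + ⟪Y, ξ⟫ • ξ)
    (hφξ : φ ξ = 0)
    (hhξ : h ξ = 0)
    (hhφ : ∀ Y : V, h (φ Y) = -φ (h Y))
    (hQφ : ∀ Y : V, Q (φ Y) = φ (Q Y))
    (c lam : ℝ) (hc : c ≠ 0)
    (hsoliton : ∀ Z : V, Q Z + c • h (φ Z) = lam • Z) :
    (∀ Z : V, Q Z = lam • Z) ∧ h = 0 := by
  have hzero : ∀ Z : V, h Z = 0 := by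
    intro Z
    -- Equation 1: Q (φ Z) - c • h Z = lam • φ Z
    have e1 : Q (φ Z) - c • h Z = lam • φ Z := by
      have := hsoliton (φ Z)
      rw [hφ2 Z] at this
      simp only [map_add, map_neg, map_smul, hhξ, smul_zero, add_zero] at this
      rw [smul_neg] at this
      linear_combination (norm := module) this
    -- Equation 2: φ (Q Z) + c • (h Z - ⟪h Z, ξ⟫ • ξ) = lam • φ Z
    have e2 : φ (Q Z) + c • (h Z - ⟪h Z, ξ⟫ • ξ) = lam • φ Z := by
      have := congrArg φ (hsoliton Z)
      simp only [map_add, map_smul, hhφ, map_neg, hφ2] at this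
      rw [show -(-h Z + ⟪h Z, ξ⟫ • ξ) = h Z - ⟪h Z, ξ⟫ • ξ by module] at this
      exact this
    have key : (2 : ℝ) • h Z = ⟪h Z, ξ⟫ • ξ := by
      have e3 : c • ((2 : ℝ) • h Z - ⟪h Z, ξ⟫ • ξ) = 0 := by
        have := e1.trans e2.symm
        rw [hQφ Z] at this
        linear_combination (norm := module) -this
      have := (smul_eq_zero.mp e3).resolve_left hc
      linear_combination (norm := module) this
    have hinner : ⟪h Z, ξ⟫ = 0 := by
      have := congrArg (fun v => ⟪v, ξ⟫) key
      simp only [inner_smul_left, real_inner_self_eq_norm_sq, hξ] at this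
      norm_num at this
      linarith
    have := key
    rw [hinner, zero_smul] at this
    have h2 : (2 : ℝ) ≠ 0 := two_ne_zero
    exact (smul_eq_zero.mp this).resolve_left h2
  refine ⟨fun Z => ?_, ?_⟩
  · have := hsoliton Z
    rw [hhφ Z, hzero Z, map_zero, neg_zero, smul_zero, add_zero] at this
    exact this
  · ext Z; simpa using hzero Z
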